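/- Let v_1,...,v_n be the vertices of an (n−1)-simplex Δ ⊂ ℝ^{n-1} and ℓ a linear functional. Then for every k ≥ 1, ∫_Δ ℓ(x)^k dx = (Vol(Δ)/C(n−1+k, k))·h_k(ℓ(v_1),...,ℓ(v_n)), where h_k is the complete homogeneous symmetric polynomial of degree k. -/

import Mathlib

open MeasureTheory

/-- Beta integral for natural exponents. -/
lemma beta_nat (b : ℕ) : ∀ (a : ℕ) (L : ℝ), 0 ≤ L →
    ∫ x in (0:ℝ)..L, x ^ a * (L - x) ^ b
      = ((a.factorial : ℝ) * b.factorial / (a + b + 1).factorial) * L ^ (a + b + 1) := by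
  induction b with
  | zero =>
    intro a L hL
    simp only [pow_zero, mul_one, integral_pow, Nat.add_zero, Nat.factorial_one]
    rw [Nat.factorial_succ]
    push_cast
    rw [zero_pow (Nat.succ_ne_zero a)]
    field_simp
    ring
  | succ b ih =>
    intro a L hL
    have hc1 : Continuous (fun x : ℝ => x ^ a * (L - x) ^ (b + 1)) := by continuity
    have hc2 : Continuous (fun x : ℝ => ((b:ℝ) + 1) / ((a:ℝ) + 1) * (x ^ (a + 1) * (L - x) ^ b)) := by
      continuity
    have hder : ∀ x : ℝ, HasDerivAt (fun x : ℝ => x ^ (a + 1) * (L - x) ^ (b + 1) / (a + 1))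
        ((x ^ a * (L - x) ^ (b + 1) - ((b:ℝ) + 1) / ((a:ℝ) + 1) * (x ^ (a + 1) * (L - x) ^ b))) x := by
      intro x
      have h1 : HasDerivAt (fun x : ℝ => x ^ (a + 1)) (((a:ℝ) + 1) * x ^ a) x := by
        simpa using (hasDerivAt_pow (a + 1) x)
      have h2 : HasDerivAt (fun x : ℝ => (L - x) ^ (b + 1)) (-(((b:ℝ) + 1) * (L - x) ^ b)) x := by
        have h3 : HasDerivAt (fun x : ℝ => L - x) (-1) x := by
          simpa using ((hasDerivAt_id x).const_sub L)
        simpa [Function.comp_def] using (HasDerivAt.comp x (hasDerivAt_pow (b + 1) (L - x)) h3)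
      have := (h1.mul h2).div_const ((a:ℝ) + 1)
      refine this.congr_deriv ?_
      have ha : ((a:ℝ) + 1) ≠ 0 := by positivity
      field_simp
      ring
    have hint : ∫ x in (0:ℝ)..L,
        (x ^ a * (L - x) ^ (b + 1) - ((b:ℝ) + 1) / ((a:ℝ) + 1) * (x ^ (a + 1) * (L - x) ^ b))
        = L ^ (a + 1) * (L - L) ^ (b + 1) / (a + 1) - (0:ℝ) ^ (a + 1) * (L - 0) ^ (b + 1) / (a + 1) :=
      intervalIntegral.integral_eq_sub_of_hasDerivAt (fun x _ => hder x)
        ((hc1.sub hc2).intervalIntegrable 0 L)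
    rw [intervalIntegral.integral_sub (hc1.intervalIntegrable 0 L) (hc2.intervalIntegrable 0 L)] at hint
    rw [sub_self, zero_pow (Nat.succ_ne_zero a), zero_pow (Nat.succ_ne_zero b)] at hint
    simp only [mul_zero, zero_mul, zero_div, sub_zero] at hint
    have hsub : ∫ x in (0:ℝ)..L, x ^ a * (L - x) ^ (b + 1)
        = ((b:ℝ) + 1) / ((a:ℝ) + 1) * ∫ x in (0:ℝ)..L, x ^ (a + 1) * (L - x) ^ b := by
      rw [← intervalIntegral.integral_const_mul]
      linarith [hint]
    rw [hsub, ih (a + 1) L hL]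
    have e1 : a + 1 + b + 1 = a + (b + 1) + 1 := by ring
    rw [e1]
    have ha : ((a:ℝ) + 1) ≠ 0 := by positivity
    have hf : ((a + (b+1) + 1).factorial : ℝ) ≠ 0 := by
      exact_mod_cast (Nat.factorial_pos _).ne'
    rw [Nat.factorial_succ a, Nat.factorial_succ b]
    push_cast
    field_simp

/-- The solid corner simplex in `ℝ^m`. -/
def Tset (m : ℕ) : Set (Fin m → ℝ) := {t | (∀ i, 0 ≤ t i) ∧ ∑ i, t i ≤ 1}

lemma isClosed_Tset (m : ℕ) : IsClosed (Tset m) := by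
  have h1 : IsClosed {t : Fin m → ℝ | ∀ i, 0 ≤ t i} := by
    have : {t : Fin m → ℝ | ∀ i, 0 ≤ t i} = ⋂ i, {t | 0 ≤ t i} := by
      ext t; simp
    rw [this]
    exact isClosed_iInter fun i => isClosed_le continuous_const (continuous_apply i)
  have h2 : IsClosed {t : Fin m → ℝ | ∑ i, t i ≤ 1} :=
    isClosed_le (continuous_finset_sum _ fun i _ => continuous_apply i) continuous_const
  exact h1.inter h2

lemma isCompact_Tset (m : ℕ) : IsCompact (Tset m) := by
  have hsub : Tset m ⊆ Set.Icc (0 : Fin m → ℝ) 1 := by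
    intro t ht
    constructor
    · intro i; exact ht.1 i
    · intro i
      calc t i ≤ ∑ j, t j := Finset.single_le_sum (fun j _ => ht.1 j) (Finset.mem_univ i)
        _ ≤ 1 := ht.2
  exact (isCompact_Icc).of_isClosed_subset (isClosed_Tset m) hsub

lemma measurableSet_Tset (m : ℕ) : MeasurableSet (Tset m) := (isClosed_Tset m).measurableSet

lemma integrableOn_Tset {m : ℕ} {g : (Fin m → ℝ) → ℝ} (hg : Continuous g) :
    IntegrableOn g (Tset m) := hg.continuousOn.integrableOn_compact (isCompact_Tset m)

lemma dirichlet (m : ℕ) : ∀ (q : Fin m → ℕ) (r : ℕ),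
    ∫ t in Tset m, (∏ i, t i ^ q i) * (1 - ∑ i, t i) ^ r
      = (∏ i, ((q i).factorial : ℝ)) * r.factorial / ((m + ∑ i, q i + r).factorial) := by
  induction m with
  | zero =>
    intro q r
    have h : Tset 0 = Set.univ := by
      ext t; simp [Tset]
    rw [h, Measure.restrict_univ]
    simp only [Finset.univ_eq_empty, Finset.prod_empty, Finset.sum_empty, sub_zero, one_pow,
      one_mul, integral_const, smul_eq_mul, mul_one]
    have hvol : (volume : Measure (Fin 0 → ℝ)) Set.univ = 1 := by
      rw [volume_pi, Measure.pi_univ]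
      simp
    rw [measureReal_def, hvol]
    have : ((r.factorial : ℝ)) ≠ 0 := by exact_mod_cast (Nat.factorial_pos r).ne'
    simp [div_self this]
  | succ m ih =>
    intro q r
    set g : (Fin (m + 1) → ℝ) → ℝ := fun t => (∏ i, t i ^ q i) * (1 - ∑ i, t i) ^ r with hgdef
    have hgc : Continuous g := by
      apply Continuous.mul
      · exact continuous_finset_prod _ fun i _ => (continuous_apply i).pow _
      · exact (continuous_const.sub (continuous_finset_sum _ fun i _ => continuous_apply i)).pow r
    rw [← integral_indicator (measurableSet_Tset _)]
    set e := MeasurableEquiv.piFinSuccAbove (fun _ : Fin (m + 1) => ℝ) 0 with he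
    have hmp : MeasurePreserving e volume ((volume : Measure ℝ).prod (volume : Measure (Fin m → ℝ))) := by
      simpa only [← volume_pi] using
        measurePreserving_piFinSuccAbove (fun _ : Fin (m + 1) => (volume : Measure ℝ)) 0
    have hint : Integrable (Set.indicator (Tset (m + 1)) g) volume :=
      (integrable_indicator_iff (measurableSet_Tset _)).mpr (integrableOn_Tset hgc)
    have h2 : ∫ t, Set.indicator (Tset (m + 1)) g t
        = ∫ z : ℝ × (Fin m → ℝ), Set.indicator (Tset (m + 1)) g (e.symm z)
            ∂((volume : Measure ℝ).prod (volume : Measure (Fin m → ℝ))) :=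
      ((MeasurePreserving.symm e hmp).integral_comp e.symm.measurableEmbedding _).symm
    have hint2 : Integrable (fun z : ℝ × (Fin m → ℝ) => Set.indicator (Tset (m + 1)) g (e.symm z))
        ((volume : Measure ℝ).prod (volume : Measure (Fin m → ℝ))) :=
      ((MeasurePreserving.symm e hmp).integrable_comp_emb e.symm.measurableEmbedding).mpr hint
    rw [h2, integral_prod_symm _ hint2]
    have hmem : ∀ (s : ℝ) (t' : Fin m → ℝ), (Fin.cons s t' ∈ Tset (m+1)) ↔
        ((∀ i, 0 ≤ t' i) ∧ (0 ≤ s ∧ s ≤ 1 - ∑ i, t' i)) := by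
      intro s t'
      simp only [Tset, Set.mem_setOf_eq, Fin.forall_fin_succ, Fin.cons_zero, Fin.cons_succ,
        Fin.sum_univ_succ]
      exact ⟨fun h => ⟨h.1.2, h.1.1, by linarith [h.2]⟩, fun h => ⟨⟨h.2.1, h.1⟩, by linarith [h.2.2]⟩⟩
    have hval : ∀ (s : ℝ) (t' : Fin m → ℝ), g (Fin.cons s t')
        = s ^ q 0 * (∏ i, t' i ^ q i.succ) * (1 - (s + ∑ i, t' i)) ^ r := by
      intro s t'
      simp only [hgdef, Fin.prod_univ_succ, Fin.sum_univ_succ, Fin.cons_zero, Fin.cons_succ]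

    have hesymm : ∀ (s : ℝ) (t' : Fin m → ℝ), e.symm (s, t') = Fin.cons s t' := by
      intro s t'
      simp [he, MeasurableEquiv.piFinSuccAbove_symm_apply, Fin.insertNth_zero', Fin.consEquiv]
    have hinner : ∀ t' : Fin m → ℝ, (∫ s : ℝ, Set.indicator (Tset (m+1)) g (e.symm (s, t')))
        = Set.indicator (Tset m) (fun t =>
            (((q 0).factorial : ℝ) * r.factorial / ((q 0) + r + 1).factorial) *
            ((∏ i, t i ^ q i.succ) * (1 - ∑ i, t i) ^ (q 0 + r + 1))) t' := by
      intro t'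
      by_cases ht' : t' ∈ Tset m
      · have hL : (0:ℝ) ≤ 1 - ∑ i, t' i := by have := ht'.2; linarith
        have hfun : (fun s : ℝ => Set.indicator (Tset (m+1)) g (e.symm (s, t')))
            = fun s => (∏ i, t' i ^ q i.succ) *
                Set.indicator (Set.Icc 0 (1 - ∑ i, t' i))
                  (fun s => s ^ q 0 * ((1 - ∑ i, t' i) - s) ^ r) s := by
          funext s
          rw [hesymm]
          by_cases hs : s ∈ Set.Icc (0:ℝ) (1 - ∑ i, t' i)
          · rw [Set.indicator_of_mem hs,
              Set.indicator_of_mem ((hmem s t').mpr ⟨ht'.1, hs.1, hs.2⟩), hval]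
            ring
          · rw [Set.indicator_of_notMem hs, Set.indicator_of_notMem, mul_zero]
            intro hmem'
            exact hs ⟨((hmem s t').mp hmem').2.1, ((hmem s t').mp hmem').2.2⟩
        rw [hfun]
        rw [MeasureTheory.integral_const_mul, integral_indicator measurableSet_Icc,
          integral_Icc_eq_integral_Ioc, ← intervalIntegral.integral_of_le hL,
          beta_nat r (q 0) _ hL, Set.indicator_of_mem ht']
        ring
      · rw [Set.indicator_of_notMem ht']
        have hz : ∀ s : ℝ, Set.indicator (Tset (m+1)) g (e.symm (s, t')) = 0 := by
          intro s
          rw [hesymm]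
          apply Set.indicator_of_notMem
          intro hmem'
          obtain ⟨h1, h2, h3⟩ := (hmem s t').mp hmem'
          exact ht' ⟨h1, by linarith⟩
        simp [hz]
    simp only [hinner]
    rw [integral_indicator (measurableSet_Tset m), MeasureTheory.integral_const_mul,
      ih (fun i => q i.succ) (q 0 + r + 1)]
    have hprod : (∏ i : Fin (m+1), ((q i).factorial : ℝ))
        = ((q 0).factorial : ℝ) * ∏ i : Fin m, ((q i.succ).factorial : ℝ) :=
      Fin.prod_univ_succ _
    have hsum : ∑ i : Fin (m+1), q i = q 0 + ∑ i : Fin m, q i.succ := Fin.sum_univ_succ _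
    rw [hprod, hsum]
    have hden : m + (∑ i : Fin m, q i.succ) + (q 0 + r + 1)
        = (m + 1) + (q 0 + ∑ i : Fin m, q i.succ) + r := by omega
    rw [hden]
    have h1 : (((q 0).factorial : ℝ)) ≠ 0 := by exact_mod_cast (Nat.factorial_pos _).ne'
    have h2 : ((r.factorial : ℝ)) ≠ 0 := by exact_mod_cast (Nat.factorial_pos _).ne'
    have h3 : (((q 0 + r + 1).factorial : ℝ)) ≠ 0 := by exact_mod_cast (Nat.factorial_pos _).ne'
    have h4 : ((((m + 1) + (q 0 + ∑ i : Fin m, q i.succ) + r).factorial : ℝ)) ≠ 0 := by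
      exact_mod_cast (Nat.factorial_pos _).ne'
    field_simp

lemma convex_Tset (m : ℕ) : Convex ℝ (Tset m) := by
  have h : Tset m = (⋂ i, {t : Fin m → ℝ | 0 ≤ t i}) ∩ {t : Fin m → ℝ | ∑ i, t i ≤ 1} := by
    ext t; simp [Tset]
  rw [h]
  refine Convex.inter (convex_iInter fun i => ?_) ?_
  · exact convex_halfSpace_ge ⟨fun x y => rfl, fun c x => rfl⟩ 0
  · exact convex_halfSpace_le
      ⟨fun x y => Finset.sum_add_distrib, fun c x => by simp [Finset.mul_sum]⟩ 1

/-- vertices of the corner simplex -/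
noncomputable def Pvert (m : ℕ) : Fin (m + 1) → (Fin m → ℝ) :=
  Fin.snoc (fun i => Pi.single i 1) 0

lemma Tset_eq_convexHull (m : ℕ) : Tset m = convexHull ℝ (Set.range (Pvert m)) := by
  apply Set.eq_of_subset_of_subset
  · intro t ht
    have key : ∑ i : Fin (m+1), (Fin.snoc t (1 - ∑ j, t j) : Fin (m+1) → ℝ) i • Pvert m i = t := by
      rw [Fin.sum_univ_castSucc]
      simp only [Fin.snoc_castSucc, Fin.snoc_last, Pvert, smul_zero, add_zero]
      funext j
      simp only [Finset.sum_apply, Pi.smul_apply, Pi.single_apply, smul_eq_mul, mul_ite,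
        mul_one, mul_zero]
      rw [Finset.sum_ite_eq Finset.univ j t]
      simp
    rw [← key]
    apply (convex_convexHull ℝ _).sum_mem
    · intro i _
      refine Fin.lastCases ?_ (fun j => ?_) i
      · simp only [Fin.snoc_last]; linarith [ht.2]
      · simp only [Fin.snoc_castSucc]; exact ht.1 j
    · rw [Fin.sum_univ_castSucc]; simp
    · intro i _; exact subset_convexHull ℝ _ (Set.mem_range_self i)
  · apply convexHull_min
    · rintro x ⟨i, rfl⟩
      refine Fin.lastCases ?_ (fun j => ?_) i
      · simp only [Pvert, Fin.snoc_last]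
        exact ⟨fun i => le_refl 0, by simp⟩
      · simp only [Pvert, Fin.snoc_castSucc]
        constructor
        · intro i
          by_cases h : i = j <;> simp [Pi.single_apply, h]
        · simp [Pi.single_apply]
    · exact convex_Tset m

lemma antidiagonalTuple_eq_piAntidiag (n k : ℕ) :
    Finset.Nat.antidiagonalTuple n k = Finset.piAntidiag (Finset.univ : Finset (Fin n)) k := by
  ext f
  simp [Finset.Nat.mem_antidiagonalTuple, Finset.mem_piAntidiag]

lemma integral_sum_pow (m k : ℕ) (a : Fin (m+1) → ℝ) :
    ∫ t in Tset m, (∑ i, t i * a i.castSucc + (1 - ∑ i, t i) * a (Fin.last m)) ^ k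
      = ((k.factorial : ℝ) / (m + k).factorial) *
          ∑ q ∈ Finset.Nat.antidiagonalTuple (m+1) k, ∏ i, a i ^ q i := by
  classical
  have hpt : ∀ t : Fin m → ℝ,
      (∑ i, t i * a i.castSucc + (1 - ∑ i, t i) * a (Fin.last m)) ^ k
        = ∑ q ∈ Finset.piAntidiag (Finset.univ : Finset (Fin (m+1))) k,
            ((Nat.multinomial Finset.univ q : ℝ) * ∏ i, a i ^ q i) *
              ((∏ i : Fin m, t i ^ q i.castSucc) * (1 - ∑ i, t i) ^ q (Fin.last m)) := by
    intro t
    have hbase : (∑ i, t i * a i.castSucc + (1 - ∑ i, t i) * a (Fin.last m))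
        = ∑ i : Fin (m+1), (Fin.snoc t (1 - ∑ j, t j) : Fin (m+1) → ℝ) i * a i := by
      rw [Fin.sum_univ_castSucc]
      simp
    rw [hbase, Finset.sum_pow_eq_sum_piAntidiag]
    refine Finset.sum_congr rfl fun q hq => ?_
    rw [Finset.prod_congr rfl (fun i _ => mul_pow ((Fin.snoc t (1 - ∑ j, t j) : Fin (m+1) → ℝ) i)
      (a i) (q i)), Finset.prod_mul_distrib]
    have hu : (∏ i : Fin (m+1), (Fin.snoc t (1 - ∑ j, t j) : Fin (m+1) → ℝ) i ^ q i)
        = (∏ i : Fin m, t i ^ q i.castSucc) * (1 - ∑ i, t i) ^ q (Fin.last m) := by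
      rw [Fin.prod_univ_castSucc]
      simp
    rw [hu]
    ring
  simp only [hpt]
  rw [MeasureTheory.integral_finset_sum]
  · rw [antidiagonalTuple_eq_piAntidiag]
    rw [Finset.mul_sum]
    refine Finset.sum_congr rfl fun q hq => ?_
    rw [MeasureTheory.integral_const_mul, dirichlet m (fun i => q i.castSucc) (q (Fin.last m))]
    obtain ⟨hqsum, -⟩ := Finset.mem_piAntidiag.mp hq
    have hsum : ∑ i : Fin m, q i.castSucc + q (Fin.last m) = k := by
      rw [← hqsum, Fin.sum_univ_castSucc]
    have hden : m + ∑ i : Fin m, q i.castSucc + q (Fin.last m) = m + k := by omega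
    rw [hden]
    have hfac : ((Nat.multinomial Finset.univ q : ℝ)) *
        ((∏ i : Fin m, ((q i.castSucc).factorial : ℝ)) * ((q (Fin.last m)).factorial : ℝ))
          = (k.factorial : ℝ) := by
      have hspec := Nat.multinomial_spec (Finset.univ : Finset (Fin (m+1))) q
      rw [hqsum] at hspec
      have hprod : (∏ i : Fin (m+1), ((q i).factorial : ℝ))
          = (∏ i : Fin m, ((q i.castSucc).factorial : ℝ)) * ((q (Fin.last m)).factorial : ℝ) :=
        Fin.prod_univ_castSucc _
      rw [← hprod, ← Nat.cast_prod, ← Nat.cast_mul, mul_comm]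
      exact_mod_cast congrArg (Nat.cast (R := ℝ)) hspec
    field_simp
    rw [← hfac]
    ring
  · intro q hq
    apply Integrable.const_mul
    apply integrableOn_Tset
    apply Continuous.mul
    · exact continuous_finset_prod _ fun i _ => (continuous_apply i).pow _
    · exact (continuous_const.sub (continuous_finset_sum _ fun i _ => continuous_apply i)).pow _

theorem integral_linear_pow_over_simplex (n k : ℕ) (hn : 1 ≤ n) (hk : 1 ≤ k)
    (v : Fin n → EuclideanSpace ℝ (Fin (n - 1))) (hv : AffineIndependent ℝ v)
    (ℓ : EuclideanSpace ℝ (Fin (n - 1)) →ₗ[ℝ] ℝ) :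
    (∫ x in convexHull ℝ (Set.range v), (ℓ x) ^ k)
      = ((volume (convexHull ℝ (Set.range v))).toReal / (n - 1 + k).choose k)
          * ∑ q ∈ Finset.Nat.antidiagonalTuple n k, ∏ i, ℓ (v i) ^ q i := by
  classical
  obtain ⟨m, rfl⟩ : ∃ m, n = m + 1 := ⟨n - 1, (Nat.succ_pred_eq_of_pos hn).symm⟩
  -- view everything in `Fin m → ℝ`
  let ψ : EuclideanSpace ℝ (Fin m) ≃ᵐ (Fin m → ℝ) := (MeasurableEquiv.toLp 2 (Fin m → ℝ)).symm
  let ψL : EuclideanSpace ℝ (Fin m) ≃ₗ[ℝ] (Fin m → ℝ) := WithLp.linearEquiv 2 ℝ (Fin m → ℝ)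
  have hψ : (⇑ψ : EuclideanSpace ℝ (Fin m) → (Fin m → ℝ)) = ⇑ψL := rfl
  set w : Fin (m+1) → (Fin m → ℝ) := fun i => ψL (v i) with hw
  set d : Fin m → (Fin m → ℝ) := fun i => w i.castSucc - w (Fin.last m) with hd
  set A : (Fin m → ℝ) →ₗ[ℝ] (Fin m → ℝ) :=
    { toFun := fun t => ∑ i, t i • d i
      map_add' := by
        intro x y
        simp [add_smul, Finset.sum_add_distrib]
      map_smul' := by
        intro c x
        simp [Finset.smul_sum, smul_smul] } with hA
  have hAapp : ∀ t, A t = ∑ i, t i • d i := fun t => rfl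
  set F : (Fin m → ℝ) → (Fin m → ℝ) := fun t => w (Fin.last m) + A t with hF
  have hFaffmk : ∀ (p : Fin m → ℝ) (v' : Fin m → ℝ), F (v' +ᵥ p) = A v' +ᵥ F p := by
    intro p v'
    simp only [hF, vadd_eq_add, map_add]
    abel
  set Faff : (Fin m → ℝ) →ᵃ[ℝ] (Fin m → ℝ) := ⟨F, A, hFaffmk⟩ with hFaff
  have hFaffco : ⇑Faff = F := rfl
  -- vertices map correctly
  have hFP : ∀ i, F (Pvert m i) = w i := by
    intro i
    refine Fin.lastCases ?_ (fun j => ?_) i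
    · have : A (Pvert m (Fin.last m)) = 0 := by
        simp [Pvert, Fin.snoc_last]
      simp [hF, this, Pvert, Fin.snoc_last]
    · have hAj : A (Pvert m j.castSucc) = d j := by
        rw [hAapp]
        simp only [Pvert, Fin.snoc_castSucc, Pi.single_apply, ite_smul, one_smul, zero_smul]
        rw [Finset.sum_ite_eq' Finset.univ j d]
        simp
      simp only [hF, hAj, hd]
      abel
  -- image of the corner simplex is the simplex spanned by w
  have himg : F '' (Tset m) = convexHull ℝ (Set.range w) := by
    rw [Tset_eq_convexHull, ← hFaffco, AffineMap.image_convexHull, ← Set.range_comp]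
    exact congrArg (convexHull ℝ) (congrArg Set.range (funext fun i => hFP i))
  -- affine independence of w, linear independence of d
  have hwAff : AffineIndependent ℝ w := by
    have h := (ψL.toLinearMap.toAffineMap.affineIndependent_iff ψL.injective).mpr hv
    exact h
  have hdLI : LinearIndependent ℝ d := by
    have h1 := (affineIndependent_iff_linearIndependent_vsub ℝ w (Fin.last m)).mp hwAff
    have h2 : d = (fun i : {x : Fin (m+1) // x ≠ Fin.last m} => w i -ᵥ w (Fin.last m)) ∘
        (fun j : Fin m => (⟨j.castSucc, (Fin.castSucc_lt_last j).ne⟩ :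
          {x : Fin (m+1) // x ≠ Fin.last m})) := by
      funext j
      simp [hd, vsub_eq_sub]
    rw [h2]
    exact h1.comp _ (fun x y hxy =>
      Fin.castSucc_injective m (by simpa using congrArg Subtype.val hxy))
  have hAinj : Function.Injective A := by
    intro x y hxy
    have h0 : A (x - y) = 0 := by rw [map_sub, hxy, sub_self]
    have h1 : ∀ i, (x - y) i = 0 := by
      apply Fintype.linearIndependent_iff.mp hdLI (x - y)
      rw [← hAapp]
      exact h0
    funext i
    have := h1 i
    simp only [Pi.sub_apply] at this
    linarith
  have hFinj : Function.Injective F := by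
    intro x y hxy
    apply hAinj
    have : w (Fin.last m) + A x = w (Fin.last m) + A y := hxy
    exact add_left_cancel this
  -- the image of the hull under ψ
  have hψimg : ψ '' (convexHull ℝ (Set.range v)) = convexHull ℝ (Set.range w) := by
    rw [hψ, show (⇑ψL : EuclideanSpace ℝ (Fin m) → (Fin m → ℝ)) = ⇑ψL.toLinearMap from rfl,
      LinearMap.image_convexHull, ← Set.range_comp]
    rfl
  -- derivative
  set Ac : (Fin m → ℝ) →L[ℝ] (Fin m → ℝ) := LinearMap.toContinuousLinearMap A with hAc
  have hCOV : ∀ g : (Fin m → ℝ) → ℝ, (∫ y in convexHull ℝ (Set.range w), g y)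
      = |Ac.det| * ∫ t in Tset m, g (F t) := by
    intro g
    have hF' : ∀ x ∈ Tset m, HasFDerivWithinAt F Ac (Tset m) x := fun x _ =>
      ((Ac.hasFDerivAt).const_add (w (Fin.last m))).hasFDerivWithinAt
    rw [← himg, integral_image_eq_integral_abs_det_fderiv_smul volume (measurableSet_Tset m)
      hF' hFinj.injOn g]
    simp only [smul_eq_mul]
    rw [MeasureTheory.integral_const_mul]
  have htrans : ∀ gE : EuclideanSpace ℝ (Fin m) → ℝ,
      (∫ x in convexHull ℝ (Set.range v), gE x)
        = ∫ y in convexHull ℝ (Set.range w), gE (ψ.symm y) := by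
    intro gE
    have h := (EuclideanSpace.volume_preserving_symm_measurableEquiv_toLp
        (Fin m)).setIntegral_image_emb ψ.measurableEmbedding
        (fun y => gE (ψ.symm y)) (convexHull ℝ (Set.range v))
    rw [hψimg] at h
    simpa [ψ] using h.symm
  -- value of ℓ along F
  have hval : ∀ t : Fin m → ℝ, ℓ (ψ.symm (F t))
      = ∑ i, t i * ℓ (v i.castSucc) + (1 - ∑ i, t i) * ℓ (v (Fin.last m)) := by
    intro t
    set L : (Fin m → ℝ) →ₗ[ℝ] ℝ := ℓ ∘ₗ (ψL.symm :
      (Fin m → ℝ) ≃ₗ[ℝ] EuclideanSpace ℝ (Fin m)).toLinearMap with hLdef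
    have hLw : ∀ i, L (w i) = ℓ (v i) := by
      intro i
      show ℓ (ψL.symm (ψL (v i))) = ℓ (v i)
      rw [LinearEquiv.symm_apply_apply]
    have h1 : ℓ (ψ.symm (F t)) = L (w (Fin.last m)) + L (A t) := by
      show L (w (Fin.last m) + A t) = _
      rw [map_add]
    have h2 : L (A t) = ∑ i, t i * L (d i) := by
      rw [hAapp, map_sum]
      simp [smul_eq_mul]
    have h3 : ∀ i, L (d i) = ℓ (v i.castSucc) - ℓ (v (Fin.last m)) := by
      intro i
      rw [hd]
      simp only [map_sub]
      rw [hLw, hLw]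
    rw [h1, h2, hLw]
    simp only [h3]
    have h4 : ∑ i, t i * (ℓ (v i.castSucc) - ℓ (v (Fin.last m)))
        = ∑ i, t i * ℓ (v i.castSucc) - (∑ i, t i) * ℓ (v (Fin.last m)) := by
      rw [Finset.sum_mul]
      rw [← Finset.sum_sub_distrib]
      exact Finset.sum_congr rfl fun i _ => by ring
    rw [h4]
    ring
  -- volume of the simplex
  have hvol1 : (volume (convexHull ℝ (Set.range v))).toReal = |Ac.det| / m.factorial := by
    have h1 : (∫ _x in convexHull ℝ (Set.range v), (1:ℝ))
        = (volume (convexHull ℝ (Set.range v))).toReal := by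
      rw [setIntegral_const]; simp [measureReal_def]
    rw [← h1, htrans (fun _ => (1:ℝ)), hCOV (fun _ => (1:ℝ))]
    have h2 : (∫ _t in Tset m, (1:ℝ)) = 1 / m.factorial := by
      have h := dirichlet m (fun _ => 0) 0
      simpa using h
    rw [h2]
    ring
  -- main computation
  have hLHS : (∫ x in convexHull ℝ (Set.range v), (ℓ x) ^ k)
      = |Ac.det| * (((k.factorial : ℝ) / (m + k).factorial) *
          ∑ q ∈ Finset.Nat.antidiagonalTuple (m+1) k, ∏ i, ℓ (v i) ^ q i) := by
    rw [htrans (fun x => (ℓ x) ^ k), hCOV (fun y => (ℓ (ψ.symm y)) ^ k)]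
    congr 1
    have h5 : ∀ t : Fin m → ℝ, (ℓ (ψ.symm (F t))) ^ k
        = (∑ i, t i * ℓ (v i.castSucc) + (1 - ∑ i, t i) * ℓ (v (Fin.last m))) ^ k := by
      intro t; rw [hval]
    simp only [h5]
    exact integral_sum_pow m k (fun i => ℓ (v i))
  rw [hLHS, hvol1]
  have hmm : ((m + 1 - 1 + k).choose k : ℝ) = ((m + k).choose k : ℝ) := rfl
  rw [hmm]
  have hC : ((m + k).choose k : ℝ) * m.factorial * k.factorial = ((m + k).factorial : ℝ) := by
    exact_mod_cast Nat.add_choose_mul_factorial_mul_factorial m k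
  have hC0 : (((m + k).choose k : ℕ) : ℝ) ≠ 0 := by
    exact_mod_cast (Nat.choose_pos (Nat.le_add_left k m)).ne'
  have hk0 : ((k.factorial : ℕ) : ℝ) ≠ 0 := by exact_mod_cast (Nat.factorial_pos k).ne'
  have hm0 : ((m.factorial : ℕ) : ℝ) ≠ 0 := by exact_mod_cast (Nat.factorial_pos m).ne'
  rw [← hC]
  field_simp
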